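/- Let c > 0, β > 1, ν ∈ ℝ. Consider the quadratic equation in λ: λ² + (c(2−β)(ik−ν)/(β−1) − (ik−ν)²)λ + βc³(ik−ν)/(β−1)² − (β+1)c²(ik−ν)²/(β−1) + c(ik−ν)³ = 0, with roots λ₁(k), λ₂(k) ordered so that Re λ₁ ≥ Re λ₂. Then lim_{|k|→∞} Re λ₁(k) = −c(cβ/(β−1) + ν) and Re λ₂(k) → −∞ as |k| → ∞. -/

import Mathlib

set_option maxHeartbeats 2000000

theorem stmt_16 (β c ν : ℝ) (hc : 0 < c) (hβ : 1 < β)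
    (l1 l2 : ℝ → ℂ)
    (hroots : ∀ k : ℝ, ∀ lam : ℂ,
      lam ^ 2
        + ((c * (2 - β) / (β - 1) : ℝ) * (Complex.I * k - ν)
            - (Complex.I * (k : ℂ) - (ν : ℂ)) ^ 2) * lam
        + (β * c ^ 3 / (β - 1) ^ 2 : ℝ) * (Complex.I * k - ν)
        - ((β + 1) * c ^ 2 / (β - 1) : ℝ) * (Complex.I * (k : ℂ) - (ν : ℂ)) ^ 2
        + (c : ℂ) * (Complex.I * (k : ℂ) - (ν : ℂ)) ^ 3
      = (lam - l1 k) * (lam - l2 k))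
    (horder : ∀ k : ℝ, (l2 k).re ≤ (l1 k).re) :
    Filter.Tendsto (fun k => (l1 k).re) (Filter.atTop ⊔ Filter.atBot)
      (nhds (-c * (c * β / (β - 1) + ν))) ∧
    Filter.Tendsto (fun k => (l2 k).re) (Filter.atTop ⊔ Filter.atBot)
      Filter.atBot := by
  have hb1 : (0:ℝ) < β - 1 := by linarith
  have hbne : (β:ℝ) - 1 ≠ 0 := ne_of_gt hb1
  have hbneC : ((β:ℂ) - 1) ≠ 0 := by
    intro h
    exact hbne (by exact_mod_cast congrArg Complex.re h)
  have hw : ((β:ℂ) - 1) * ((β:ℂ) - 1)⁻¹ = 1 := mul_inv_cancel₀ hbneC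
  have hw2 : (((β:ℂ) - 1) ^ 2) * (((β:ℂ) - 1) ^ 2)⁻¹ = 1 :=
    mul_inv_cancel₀ (pow_ne_zero 2 hbneC)
  set L : ℝ := -c * (c * β / (β - 1) + ν) with hLdef
  obtain ⟨alR, halR⟩ : ∃ x : ℝ, x = -(β * c ^ 2 / (β - 1)) := ⟨_, rfl⟩
  obtain ⟨AR, hAR⟩ : ∃ x : ℝ, x = -(β * c ^ 3 / (β - 1)) := ⟨_, rfl⟩
  obtain ⟨aP, haP⟩ : ∃ x : ℝ, x = c * (2 - β) / (β - 1) + 2 * c := ⟨_, rfl⟩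
  obtain ⟨C1, hC1def⟩ : ∃ x : ℝ, x = 2 * |AR| + alR ^ 2 := ⟨_, rfl⟩
  obtain ⟨C2, hC2def⟩ : ∃ x : ℝ, x = ν ^ 2 + |aP| * |ν| + 2 * |alR| := ⟨_, rfl⟩
  obtain ⟨T, hTdef⟩ : ∃ x : ℝ,
      x = |ν| + alR ^ 2 + C2 + 8 * C1 + 8 * |aP| + 8 * |alR| + 1 := ⟨_, rfl⟩
  have hC1 : 0 ≤ C1 := by rw [hC1def]; positivity
  have hC2 : 0 ≤ C2 := by rw [hC2def]; positivity
  have hT1 : 1 ≤ T := by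
    rw [hTdef]
    nlinarith [abs_nonneg ν, sq_nonneg alR, abs_nonneg aP, abs_nonneg alR, hC1, hC2]
  have key : ∀ k : ℝ, T ≤ |k| →
      |(l1 k).re - L| ≤ 4 * C1 / |k| ∧ (l2 k).re ≤ L + C2 + 4 * C1 - k ^ 2 := by
    intro k hk
    have hk1 : (1:ℝ) ≤ |k| := le_trans hT1 hk
    have hk0 : (0:ℝ) < |k| := lt_of_lt_of_le one_pos hk1
    have hkk : |k| ≤ k ^ 2 := by nlinarith [_root_.sq_abs k, hk1, abs_nonneg k]
    have hkν : |ν| ≤ |k| := by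
      have : |ν| ≤ T := by
        rw [hTdef]
        linarith [sq_nonneg alR, abs_nonneg aP, abs_nonneg alR, hC1, hC2]
      linarith
    obtain ⟨z, hz⟩ : ∃ x : ℂ, x = Complex.I * (k:ℂ) - (ν:ℂ) := ⟨_, rfl⟩
    obtain ⟨r, hr⟩ : ∃ x : ℂ, x = (c:ℂ) * z + (alR:ℂ) := ⟨_, rfl⟩
    obtain ⟨u, hu⟩ : ∃ x : ℂ, x = r - l1 k := ⟨_, rfl⟩
    obtain ⟨v, hv⟩ : ∃ x : ℂ, x = r - l2 k := ⟨_, rfl⟩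
    have hzre : z.re = -ν := by rw [hz]; simp
    have hzim : z.im = k := by rw [hz]; simp
    have habs2 : (‖z‖) ^ 2 = k ^ 2 + ν ^ 2 := by
      rw [Complex.sq_norm, Complex.normSq_apply, hzre, hzim]; ring
    have hzub : ‖z‖ ≤ |k| + |ν| := by
      have e : z = Complex.I * (k:ℂ) + (-(ν:ℂ)) := by rw [hz]; ring
      rw [e]
      refine le_trans (norm_add_le _ _) ?_
      rw [norm_mul, Complex.norm_I, one_mul, Complex.norm_real, Real.norm_eq_abs, norm_neg,
        Complex.norm_real, Real.norm_eq_abs]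
    -- product identity
    have hW : u * v = (AR:ℂ) * z + ((alR ^ 2 : ℝ):ℂ) := by
      have h := hroots k r
      rw [hr, halR, hz] at h
      rw [hu, hv, hr, hAR, halR, hz]
      push_cast at h ⊢
      linear_combination
        (((β:ℂ) * (c:ℂ)^3 * ((β:ℂ)-1)⁻¹ * (Complex.I*(k:ℂ)-(ν:ℂ))
            - (c:ℂ)^2 * (Complex.I*(k:ℂ)-(ν:ℂ))^2)
          - (β:ℂ) * (c:ℂ)^3 * (Complex.I*(k:ℂ)-(ν:ℂ)) * (((β:ℂ)-1)^2)⁻¹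
              * (((β:ℂ)-1) * ((β:ℂ)-1)⁻¹ + 1)) * hw
        + ((β:ℂ) * (c:ℂ)^3 * (Complex.I*(k:ℂ)-(ν:ℂ)) * ((β:ℂ)-1)⁻¹^2) * hw2
        - h
    -- sum identity
    have hsum : l1 k + l2 k
        = (Complex.I * (k:ℂ) - (ν:ℂ)) ^ 2
          - ((c:ℂ) * (2 - (β:ℂ)) / ((β:ℂ) - 1)) * (Complex.I * (k:ℂ) - (ν:ℂ)) := by
      have h0 := hroots k 0
      have h1 := hroots k 1
      push_cast at h0 h1
      linear_combination h1 - h0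
    have hS : u + v = -(z ^ 2 - ((aP:ℝ):ℂ) * z - ((2 * alR : ℝ):ℂ)) := by
      rw [hu, hv, hr, halR, haP, hz]
      push_cast
      linear_combination -hsum
    have hz2re : (z ^ 2).re = ν ^ 2 - k ^ 2 := by
      rw [pow_two, Complex.mul_re, hzre, hzim]; ring
    have hSre : (u + v).re = k ^ 2 - ν ^ 2 - aP * ν + 2 * alR := by
      rw [hS]
      simp [Complex.neg_re, Complex.sub_re, Complex.mul_re, Complex.ofReal_re,
        Complex.ofReal_im, hz2re, hzre, hzim]
      ring
    have hrre : r.re = L := by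
      have h1 : r.re = c * (-ν) + alR := by
        rw [hr, Complex.add_re, Complex.mul_re, Complex.ofReal_re, Complex.ofReal_im,
          Complex.ofReal_re, hzre, hzim]
        ring
      rw [h1, halR, hLdef]; ring
    have hl1re : (l1 k).re = L - u.re := by
      rw [hu, Complex.sub_re, hrre]; ring
    have hl2re : (l2 k).re = L - v.re := by
      rw [hv, Complex.sub_re, hrre]; ring
    have huvre : u.re + v.re = k ^ 2 - ν ^ 2 - aP * ν + 2 * alR := by
      rw [← Complex.add_re]; exact hSre
    -- abs bounds
    have hprod : ‖u‖ * ‖v‖ ≤ C1 * |k| := by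
      rw [← norm_mul, hW]
      calc ‖(AR:ℂ) * z + ((alR ^ 2 : ℝ):ℂ)‖
          ≤ ‖(AR:ℂ) * z‖ + ‖((alR ^ 2 : ℝ):ℂ)‖ :=
            norm_add_le _ _
        _ = |AR| * ‖z‖ + alR ^ 2 := by
            rw [norm_mul, Complex.norm_real, Real.norm_eq_abs, Complex.norm_real, Real.norm_eq_abs, abs_of_nonneg (sq_nonneg alR)]
        _ ≤ C1 * |k| := by
            rw [hC1def]
            linarith [mul_le_mul_of_nonneg_left hzub (abs_nonneg AR),
              mul_le_mul_of_nonneg_left hkν (abs_nonneg AR),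
              mul_le_mul_of_nonneg_left hk1 (sq_nonneg alR)]
    have hSabs : k ^ 2 / 2 ≤ ‖u + v‖ := by
      have hx : u + v = -(z ^ 2 - (((aP:ℝ):ℂ) * z + ((2 * alR : ℝ):ℂ))) := by
        rw [hS]; ring
      rw [hx, norm_neg]
      have tri := norm_sub_norm_le (z ^ 2) (((aP:ℝ):ℂ) * z + ((2 * alR : ℝ):ℂ))
      have h1 : ‖z ^ 2‖ = k ^ 2 + ν ^ 2 := by rw [norm_pow, habs2]
      have h2 : ‖((aP:ℝ):ℂ) * z + ((2 * alR : ℝ):ℂ)‖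
          ≤ |aP| * (|k| + |ν|) + 2 * |alR| := by
        calc ‖((aP:ℝ):ℂ) * z + ((2 * alR : ℝ):ℂ)‖
            ≤ ‖((aP:ℝ):ℂ) * z‖ + ‖((2 * alR : ℝ):ℂ)‖ :=
              norm_add_le _ _
          _ = |aP| * ‖z‖ + |2 * alR| := by
              rw [norm_mul, Complex.norm_real, Real.norm_eq_abs, Complex.norm_real, Real.norm_eq_abs]
          _ ≤ |aP| * (|k| + |ν|) + 2 * |alR| := by
              rw [abs_mul, abs_two]
              nlinarith [hzub, abs_nonneg aP]
      have hTk : 8 * |aP| + 8 * |alR| ≤ |k| := by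
        have : 8 * |aP| + 8 * |alR| ≤ T := by
          rw [hTdef]
          linarith [abs_nonneg ν, sq_nonneg alR, hC1, hC2]
        linarith
      linarith [tri, h1, h2, mul_le_mul_of_nonneg_left hkν (abs_nonneg aP),
        mul_le_mul_of_nonneg_right hTk (abs_nonneg k),
        mul_le_mul_of_nonneg_left hk1 (abs_nonneg alR), _root_.sq_abs k, sq_nonneg ν]
    have hC2b : -C2 ≤ -ν ^ 2 - aP * ν + 2 * alR := by
      rw [hC2def]
      linarith [le_abs_self (aP * ν), abs_mul aP ν, neg_abs_le alR]
    rcases le_or_gt (‖u‖) (‖v‖) with hcase | hcase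
    · -- |u| ≤ |v| : l1 near r, l2 far
      have hv4 : k ^ 2 / 4 ≤ ‖v‖ := by
        have tri := norm_add_le u v
        linarith [hSabs]
      have e1 : ‖u‖ * (k ^ 2 / 4) ≤ C1 * |k| :=
        le_trans (mul_le_mul_of_nonneg_left hv4 (norm_nonneg u)) hprod
      have huk : ‖u‖ * |k| ≤ 4 * C1 := by
        nlinarith [e1, _root_.sq_abs k, hk0, norm_nonneg u]
      have hu4 : ‖u‖ ≤ 4 * C1 := by
        linarith [mul_le_mul_of_nonneg_left hk1 (norm_nonneg u), huk]
      have hure : |u.re| ≤ 4 * C1 := le_trans (Complex.abs_re_le_norm u) hu4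
      constructor
      · rw [hl1re]
        have e1 : L - u.re - L = -u.re := by ring
        rw [e1, abs_neg]
        rw [le_div_iff₀ hk0]
        exact le_trans (mul_le_mul_of_nonneg_right (Complex.abs_re_le_norm u) (le_of_lt hk0)) huk
      · rw [hl2re]
        have : k ^ 2 - C2 - 4 * C1 ≤ v.re := by
          have habs := abs_le.mp hure
          linarith [huvre, hC2b, habs.1, habs.2]
        linarith
    · -- |v| < |u| : contradiction with ordering
      exfalso
      have hu4' : k ^ 2 / 4 ≤ ‖u‖ := by
        have tri := norm_add_le u v
        linarith [hSabs]
      have e1 : ‖v‖ * (k ^ 2 / 4) ≤ C1 * |k| := by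
        have := mul_le_mul_of_nonneg_left hu4' (norm_nonneg v)
        calc ‖v‖ * (k ^ 2 / 4) ≤ ‖v‖ * ‖u‖ := this
          _ = ‖u‖ * ‖v‖ := mul_comm _ _
          _ ≤ C1 * |k| := hprod
      have hvk : ‖v‖ * |k| ≤ 4 * C1 := by
        nlinarith [e1, _root_.sq_abs k, hk0, norm_nonneg v]
      have hv4 : ‖v‖ ≤ 4 * C1 := by
        linarith [mul_le_mul_of_nonneg_left hk1 (norm_nonneg v), hvk]
      have hvre : |v.re| ≤ 4 * C1 := le_trans (Complex.abs_re_le_norm v) hv4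
      have hure' : k ^ 2 - C2 - 4 * C1 ≤ u.re := by
        have habs := abs_le.mp hvre
        linarith [huvre, hC2b, habs.1, habs.2]
      have h1 : (l1 k).re ≤ L - k ^ 2 + C2 + 4 * C1 := by rw [hl1re]; linarith
      have h2 : L - 4 * C1 ≤ (l2 k).re := by
        rw [hl2re]
        have := (abs_le.mp hvre).2
        linarith
      have hord := horder k
      have hTk : C2 + 8 * C1 + 1 ≤ |k| := by
        have : C2 + 8 * C1 + 1 ≤ T := by
          rw [hTdef]
          linarith [abs_nonneg ν, sq_nonneg alR, abs_nonneg aP, abs_nonneg alR]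
        linarith
      linarith
  -- eventual largeness of |k|
  have hEv : ∀ M : ℝ, ∀ᶠ k in (Filter.atTop ⊔ Filter.atBot : Filter ℝ), M ≤ |k| := by
    intro M
    rw [Filter.eventually_sup]
    constructor
    · filter_upwards [Filter.eventually_ge_atTop M] with k hk
      exact le_trans hk (le_abs_self k)
    · filter_upwards [Filter.eventually_le_atBot (-M)] with k hk
      have : M ≤ -k := by linarith
      exact le_trans this (neg_le_abs k)
  constructor
  · rw [Metric.tendsto_nhds]
    intro ε hε
    filter_upwards [hEv (max T (4 * C1 / ε + 1))] with k hk
    have hkT : T ≤ |k| := le_trans (le_max_left _ _) hk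
    have hk2 : 4 * C1 / ε + 1 ≤ |k| := le_trans (le_max_right _ _) hk
    have hk0 : (0:ℝ) < |k| := lt_of_lt_of_le (lt_of_lt_of_le one_pos hT1) hkT
    obtain ⟨h1, _⟩ := key k hkT
    rw [Real.dist_eq]
    have hεne : ε ≠ 0 := ne_of_gt hε
    have hεk : ε * (4 * C1 / ε) = 4 * C1 := by field_simp
    have : 4 * C1 / |k| < ε := by
      rw [div_lt_iff₀ hk0]
      nlinarith [hε, hεk, hk2]
    linarith
  · rw [Filter.tendsto_atBot]
    intro b
    filter_upwards [hEv (max T (|L + C2 + 4 * C1 - b| + 1))] with k hk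
    have hkT : T ≤ |k| := le_trans (le_max_left _ _) hk
    have hk2 : |L + C2 + 4 * C1 - b| + 1 ≤ |k| := le_trans (le_max_right _ _) hk
    obtain ⟨_, h2⟩ := key k hkT
    have hk1 : (1:ℝ) ≤ |k| := by nlinarith [abs_nonneg (L + C2 + 4 * C1 - b)]
    have hkk : |k| ≤ k ^ 2 := by nlinarith [_root_.sq_abs k, abs_nonneg k]
    nlinarith [le_abs_self (L + C2 + 4 * C1 - b)]
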